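/- Let q be a prime power, let A(X) ∈ 𝔽_q[X], and write A(X) = Σ_{i≥0} A_i(X)·Λ(X)^i where Λ(X) = X^q − X and each A_i(X) ∈ 𝔽_q[X] has degree strictly less than q (the base-Λ expansion of A, which exists and is unique). Then for every integer k ≥ 0: A has pseudodegree at most k if and only if every A_i has degree at most k. -/

import Mathlib

open Polynomial

/-- `A ∈ 𝔽_q[X]` has pseudodegree at most `k`: for every `ℓ ≥ 0`, the remainder of the
`ℓ`-th Hasse derivative of `A` upon division by `Λ(X) = X^q - X` has degree at most `k`. -/
def PdegLE {F : Type*} [Field F] (q : ℕ) (A : F[X]) (k : ℕ) : Prop :=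
  ∀ ℓ : ℕ, ((hasseDeriv ℓ A) %ₘ (X ^ q - X)).degree ≤ (k : WithBot ℕ)

section Aux

variable {F : Type*} [Field F]

lemma lam_coeff (q m : ℕ) :
    (X ^ q - X : F[X]).coeff m = (if m = q then 1 else 0) - (if 1 = m then 1 else 0) := by
  simp [coeff_X_pow, coeff_X]

lemma hd_lam (q : ℕ) (hq2 : 2 ≤ q)
    (hch : ∀ m, 0 < m → m < q → (q.choose m : F) = 0)
    (m : ℕ) (hm : 1 ≤ m) :
    hasseDeriv m (X ^ q - X : F[X]) = C ((X ^ q - X : F[X]).coeff m) := by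
  ext d
  rw [hasseDeriv_coeff, coeff_C]
  rcases eq_or_ne d 0 with rfl | hd
  · simp
  · rw [if_neg hd, lam_coeff]
    rcases eq_or_ne (d + m) q with h | h
    · rw [if_pos h, if_neg (by omega : (1 : ℕ) ≠ d + m)]
      rw [h]
      rw [hch m (by omega) (by omega)]
      ring
    · rw [if_neg h, if_neg (by omega : (1 : ℕ) ≠ d + m)]
      ring

lemma key_dvd (q : ℕ) (hq2 : 2 ≤ q)
    (hch : ∀ m, 0 < m → m < q → (q.choose m : F) = 0) :
    ∀ (j m : ℕ), (X ^ q - X : F[X]) ∣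
      hasseDeriv m ((X ^ q - X : F[X]) ^ j) - C (((X ^ q - X : F[X]) ^ j).coeff m) := by
  intro j
  induction j with
  | zero =>
    intro m
    rcases eq_or_ne m 0 with rfl | hm
    · simp
    · rw [pow_zero, ← C_1, hasseDeriv_C _ _ (Nat.pos_of_ne_zero hm), coeff_C, if_neg hm]
      simp
  | succ j ih =>
    intro m
    rw [pow_succ, hasseDeriv_mul, coeff_mul, map_sum, ← Finset.sum_sub_distrib]
    apply Finset.dvd_sum
    rintro ⟨a, b⟩ hab
    simp only
    rcases eq_or_ne b 0 with rfl | hb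
    · rw [hasseDeriv_zero', lam_coeff q 0, if_neg (by omega : (0 : ℕ) ≠ q),
        if_neg (by omega : (1 : ℕ) ≠ 0)]
      simp only [sub_zero, mul_zero, map_zero, sub_zero]
      exact dvd_mul_left _ _
    · rw [hd_lam q hq2 hch b (Nat.one_le_iff_ne_zero.mpr hb)]
      have : hasseDeriv a ((X ^ q - X : F[X]) ^ j) * C ((X ^ q - X : F[X]).coeff b)
          - C (((X ^ q - X : F[X]) ^ j).coeff a * (X ^ q - X : F[X]).coeff b)
          = (hasseDeriv a ((X ^ q - X : F[X]) ^ j) - C (((X ^ q - X : F[X]) ^ j).coeff a))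
            * C ((X ^ q - X : F[X]).coeff b) := by
        rw [sub_mul, map_mul]
      rw [this]
      exact dvd_mul_of_dvd_left (ih a) _

lemma lam_pow_support (q : ℕ) (hq2 : 2 ≤ q) (j m : ℕ)
    (h : (((X ^ q - X : F[X])) ^ j).coeff m ≠ 0) :
    ∃ t ≤ j, m = j + t * (q - 1) := by
  have hfac : (X ^ q - X : F[X]) ^ j = ((X : F[X]) ^ (q - 1) - 1) ^ j * X ^ j := by
    rw [← mul_pow]
    congr 1
    rw [sub_one_mul, ← pow_succ]
    congr 2
    omega
  rw [hfac, coeff_mul_X_pow'] at h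
  by_cases hjm : j ≤ m
  swap
  · rw [if_neg hjm] at h; exact absurd rfl h
  rw [if_pos hjm] at h
  have hexp : ((X : F[X]) ^ (q - 1) - 1) ^ j = expand F (q - 1) ((X - 1) ^ j) := by
    rw [map_pow, map_sub, expand_X, map_one]
  rw [hexp, coeff_expand (by omega : 0 < q - 1)] at h
  by_cases hdvd : (q - 1) ∣ (m - j)
  swap
  · rw [if_neg hdvd] at h; exact absurd rfl h
  rw [if_pos hdvd] at h
  refine ⟨(m - j) / (q - 1), ?_, ?_⟩
  · have h1 : (m - j) / (q - 1) ≤ ((X - 1 : F[X]) ^ j).natDegree := le_natDegree_of_ne_zero h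
    have h2 : ((X - 1 : F[X]) ^ j).natDegree ≤ j * (X - 1 : F[X]).natDegree :=
      natDegree_pow_le
    have h3 : (X - 1 : F[X]).natDegree = 1 := by
      rw [show (X - 1 : F[X]) = X - C 1 by rw [map_one], natDegree_X_sub_C]
    rw [h3, mul_one] at h2
    omega
  · have := Nat.div_mul_cancel hdvd
    omega

end Aux

/-- Write `A = Σ_i A_i · Λ^i` (base-`Λ` expansion, each `deg(A_i) < q`).
Then for every `k ≥ 0`: `A` has pseudodegree at most `k` iff every `A_i` has degree at
most `k`. -/
theorem stmt6 {F : Type*} [Field F] [Fintype F] (q : ℕ) (hq : Fintype.card F = q)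
    (A : F[X]) (Ai : ℕ → F[X]) (n : ℕ)
    (hdeg : ∀ i, (Ai i).degree < (q : ℕ))
    (hsupp : ∀ i, n ≤ i → Ai i = 0)
    (hA : A = ∑ i ∈ Finset.range n, Ai i * (X ^ q - X) ^ i)
    (k : ℕ) :
    PdegLE q A k ↔ ∀ i, (Ai i).degree ≤ (k : WithBot ℕ) := by
  classical
  obtain ⟨p, hpinst⟩ := CharP.exists F
  haveI := hpinst
  obtain ⟨nn, hp, hcard⟩ := FiniteField.card F p
  rw [hq] at hcard
  have hq2 : 2 ≤ q := by
    rw [← hq]; exact Fintype.one_lt_card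
  have hch : ∀ m, 0 < m → m < q → (q.choose m : F) = 0 := by
    intro m hm1 hm2
    have : p ∣ q.choose m := by
      rw [hcard]
      exact Nat.Prime.dvd_choose_pow hp (by omega) (by rw [← hcard]; omega)
    exact (CharP.cast_eq_zero_iff F p _).mpr this
  set Λ : F[X] := X ^ q - X with hΛdef
  have hmonic : Λ.Monic := by
    apply monic_X_pow_sub
    rw [degree_X]
    exact_mod_cast (by omega : 1 < q)
  have hdegΛ : Λ.degree = q := by
    rw [hΛdef, degree_sub_eq_left_of_degree_lt, degree_X_pow]
    rw [degree_X_pow, degree_X]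
    exact_mod_cast (by omega : 1 < q)
  -- the remainder polynomial
  set R : ℕ → F[X] := fun ℓ => ∑ j ∈ Finset.range n, ∑ sm ∈ Finset.HasAntidiagonal.antidiagonal ℓ,
      hasseDeriv sm.1 (Ai j) * C ((Λ ^ j).coeff sm.2) with hRdef
  have coeff_R : ∀ ℓ d, (R ℓ).coeff d = ∑ j ∈ Finset.range n, ∑ sm ∈ Finset.HasAntidiagonal.antidiagonal ℓ,
      ((d + sm.1).choose sm.1 : F) * (Ai j).coeff (d + sm.1) * (Λ ^ j).coeff sm.2 := by
    intro ℓ d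
    rw [hRdef]
    rw [finset_sum_coeff]
    apply Finset.sum_congr rfl
    intro j _
    rw [finset_sum_coeff]
    apply Finset.sum_congr rfl
    intro sm _
    rw [coeff_mul_C, hasseDeriv_coeff]
  have hdvd : ∀ ℓ, Λ ∣ hasseDeriv ℓ A - R ℓ := by
    intro ℓ
    rw [hA, map_sum, hRdef, ← Finset.sum_sub_distrib]
    apply Finset.dvd_sum
    intro j _
    rw [hasseDeriv_mul, ← Finset.sum_sub_distrib]
    apply Finset.dvd_sum
    rintro ⟨s, m⟩ _
    simp only
    have : hasseDeriv s (Ai j) * hasseDeriv m (Λ ^ j)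
        - hasseDeriv s (Ai j) * C ((Λ ^ j).coeff m)
        = hasseDeriv s (Ai j) * (hasseDeriv m (Λ ^ j) - C ((Λ ^ j).coeff m)) := by ring
    rw [this]
    exact Dvd.dvd.mul_left (key_dvd q hq2 hch j m) _
  have hRdeg : ∀ ℓ, (R ℓ).degree < (q : WithBot ℕ) := by
    intro ℓ
    rw [degree_lt_iff_coeff_zero]
    intro d hd
    have hd' : q ≤ d := by exact_mod_cast hd
    rw [coeff_R]
    apply Finset.sum_eq_zero
    intro j _
    apply Finset.sum_eq_zero
    rintro ⟨s, m⟩ _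
    have : (Ai j).coeff (d + s) = 0 := by
      apply coeff_eq_zero_of_degree_lt
      refine (hdeg j).trans_le ?_
      exact_mod_cast (by omega : q ≤ d + s)
    simp [this]
  have hrem : ∀ ℓ, hasseDeriv ℓ A %ₘ Λ = R ℓ := by
    intro ℓ
    have h1 : (hasseDeriv ℓ A - R ℓ) %ₘ Λ = 0 :=
      (modByMonic_eq_zero_iff_dvd hmonic).2 (hdvd ℓ)
    have h2 : R ℓ %ₘ Λ = R ℓ :=
      (modByMonic_eq_self_iff hmonic).2 (by rw [hdegΛ]; exact hRdeg ℓ)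
    calc hasseDeriv ℓ A %ₘ Λ = (R ℓ + (hasseDeriv ℓ A - R ℓ)) %ₘ Λ := by ring_nf
      _ = R ℓ %ₘ Λ + (hasseDeriv ℓ A - R ℓ) %ₘ Λ := add_modByMonic _ _
      _ = R ℓ := by rw [h1, h2, add_zero]
  constructor
  · intro hPd
    have main : ∀ t i, n ≤ i + t → (Ai i).degree ≤ (k : WithBot ℕ) := by
      intro t
      induction t with
      | zero =>
        intro i hi
        rw [hsupp i (by omega)]
        simp
      | succ t iht =>
        intro i hi
        by_cases hni : n ≤ i
        · rw [hsupp i hni]; simp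
        have IH : ∀ j, i < j → (Ai j).degree ≤ (k : WithBot ℕ) := by
          intro j hj
          exact iht j (by omega)
        rw [degree_le_iff_coeff_zero]
        intro d hkd
        have hkd' : k < d := by exact_mod_cast hkd
        have hdeg' : (R (i * q)).degree ≤ (k : WithBot ℕ) := by
          have := hPd (i * q)
          rwa [← hΛdef, hrem (i * q)] at this
        have hcz : (R (i * q)).coeff d = 0 :=
          (degree_le_iff_coeff_zero _ _).1 hdeg' d hkd
        rw [coeff_R] at hcz
        -- all terms vanish except the (i, (0, i*q)) one
        have hzero : ∀ j, j ∈ Finset.range n → ∀ sm : ℕ × ℕ,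
            sm ∈ Finset.HasAntidiagonal.antidiagonal (i * q) → ¬(j = i ∧ sm = (0, i * q)) →
            ((d + sm.1).choose sm.1 : F) * (Ai j).coeff (d + sm.1) * (Λ ^ j).coeff sm.2
              = 0 := by
          rintro j _ ⟨s, m⟩ hsm hne
          rw [Finset.HasAntidiagonal.mem_antidiagonal] at hsm
          by_contra hterm
          have hA0 : (Ai j).coeff (d + s) ≠ 0 := by
            intro h; apply hterm; rw [h]; ring
          have hL0 : (Λ ^ j).coeff m ≠ 0 := by
            intro h; apply hterm; rw [h]; ring
          have hds : (d + s : ℕ) < q := by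
            have h1 : ((d + s : ℕ) : WithBot ℕ) ≤ (Ai j).degree := le_degree_of_ne_zero hA0
            have := h1.trans_lt (hdeg j)
            exact_mod_cast this
          obtain ⟨t', ht'j, hm⟩ := lam_pow_support q hq2 j m hL0
          -- arithmetic: either j = i ∧ s = 0, or i < j
          have harith : (j = i ∧ s = 0) ∨ i < j := by
            have hiq : i * q = i * (q - 1) + i := by
              have : q - 1 + 1 = q := by omega
              calc i * q = i * (q - 1 + 1) := by rw [this]
                _ = i * (q - 1) + i := by ring
            rcases lt_trichotomy t' i with h | h | h
            · have hmul : t' * (q - 1) + (q - 1) ≤ i * (q - 1) := by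
                have h1 : (t' + 1) * (q - 1) ≤ i * (q - 1) :=
                  Nat.mul_le_mul_right _ (by omega)
                have h2 : (t' + 1) * (q - 1) = t' * (q - 1) + (q - 1) := by ring
                omega
              omega
            · subst h
              omega
            · have hmul : i * (q - 1) + (q - 1) ≤ t' * (q - 1) := by
                have h1 : (i + 1) * (q - 1) ≤ t' * (q - 1) :=
                  Nat.mul_le_mul_right _ (by omega)
                have h2 : (i + 1) * (q - 1) = i * (q - 1) + (q - 1) := by ring
                omega
              omega
          rcases harith with ⟨hji, hs0⟩ | hij
          · exact hne ⟨hji, by subst hs0; simp only [zero_add] at hsm; rw [hsm]⟩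
          · have : (Ai j).coeff (d + s) = 0 := by
              apply coeff_eq_zero_of_degree_lt
              refine (IH j hij).trans_lt ?_
              exact_mod_cast (by omega : k < d + s)
            exact hA0 this
        have hii : i ∈ Finset.range n := Finset.mem_range.mpr (by omega)
        have h0m : ((0, i * q) : ℕ × ℕ) ∈ Finset.HasAntidiagonal.antidiagonal (i * q) := by simp
        have hL1 : (Λ ^ i).coeff (i * q) = 1 := by
          have hnd : (Λ ^ i).natDegree = i * q := by
            rw [natDegree_pow, natDegree_eq_of_degree_eq_some hdegΛ]
          rw [← hnd]
          exact (hmonic.pow i).coeff_natDegree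
        rw [Finset.sum_eq_single_of_mem i hii
            (fun j hj hne => Finset.sum_eq_zero fun sm hsm =>
              hzero j hj sm hsm (fun hc => hne hc.1)),
          Finset.sum_eq_single_of_mem ((0, i * q) : ℕ × ℕ) h0m
            (fun sm hsm hne => hzero i hii sm hsm (fun hc => hne hc.2))] at hcz
        simpa [hL1] using hcz
    intro i
    exact main n i (by omega)
  · intro hk ℓ
    rw [← hΛdef, hrem ℓ]
    rw [degree_le_iff_coeff_zero]
    intro d hkd
    have hkd' : k < d := by exact_mod_cast hkd
    rw [coeff_R]
    apply Finset.sum_eq_zero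
    intro j _
    apply Finset.sum_eq_zero
    rintro ⟨s, m⟩ _
    have : (Ai j).coeff (d + s) = 0 := by
      apply coeff_eq_zero_of_degree_lt
      refine (hk j).trans_lt ?_
      exact_mod_cast (by omega : k < d + s)
    simp [this]
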